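/- Let (M_n, d_n), n ∈ ℕ, be a sequence of separable complete metric spaces. Then the equivalence relation E((M_n)_{n∈ℕ}, 0) on the Polish space Π_{n∈ℕ} M_n is Borel reducible to the equivalence relation ℝ^ℕ/c₀ on ℝ^ℕ. -/

import Mathlib

open Filter Topology MeasureTheory
open scoped ENNReal NNReal

noncomputable section

/-- `E` is Borel reducible to `F`: there is a Borel (measurable) map `θ` such that
`E x y ↔ F (θ x) (θ y)` for all `x, y`. -/
def BorelReducible {α β : Type*} [MeasurableSpace α] [MeasurableSpace β]
    (E : α → α → Prop) (F : β → β → Prop) : Prop :=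
  ∃ θ : α → β, Measurable θ ∧ ∀ x y, E x y ↔ F (θ x) (θ y)

namespace C0Aux

variable {α : Type*} [MetricSpace α]

/-- `auxD g a k = min (1, min_{m < k} dist a (g m))`. -/
noncomputable def auxD (g : ℕ → α) (a : α) : ℕ → ℝ
  | 0 => 1
  | k + 1 => min (auxD g a k) (dist a (g k))

lemma auxD_nonneg (g : ℕ → α) (a : α) : ∀ k, 0 ≤ auxD g a k
  | 0 => zero_le_one
  | k + 1 => le_min (auxD_nonneg g a k) dist_nonneg

lemma auxD_le_dist (g : ℕ → α) (a : α) : ∀ {k m : ℕ}, m < k → auxD g a k ≤ dist a (g m) := by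
  intro k
  induction k with
  | zero => exact fun hm => absurd hm (Nat.not_lt_zero _)
  | succ k ih =>
    intro m hm
    rcases Nat.lt_succ_iff_lt_or_eq.mp hm with h | h
    · exact (min_le_left _ _).trans (ih h)
    · subst h; exact min_le_right _ _

lemma le_auxD (g : ℕ → α) (a : α) {c : ℝ} (hc : c ≤ 1) :
    ∀ k, (∀ m, m < k → c ≤ dist a (g m)) → c ≤ auxD g a k
  | 0, _ => hc
  | k + 1, h =>
    le_min (le_auxD g a hc k fun m hm => h m (hm.trans (Nat.lt_succ_self k)))
      (h k (Nat.lt_succ_self k))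

lemma abs_min_sub_min {u v u' v' C : ℝ} (h1 : |u - u'| ≤ C) (h2 : |v - v'| ≤ C) :
    |min u v - min u' v'| ≤ C := by
  rw [abs_sub_le_iff] at h1 h2 ⊢
  constructor
  · rcases le_total u' v' with h | h
    · rw [min_eq_left h]; have := min_le_left u v; linarith [h1.1]
    · rw [min_eq_right h]; have := min_le_right u v; linarith [h2.1]
  · rcases le_total u v with h | h
    · rw [min_eq_left h]; have := min_le_left u' v'; linarith [h1.2]
    · rw [min_eq_right h]; have := min_le_right u' v'; linarith [h2.2]

lemma abs_max_zero_sub {x y : ℝ} : |max 0 x - max 0 y| ≤ |x - y| := by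
  rcases le_total x 0 with hx | hx <;> rcases le_total y 0 with hy | hy <;>
    rw [abs_sub_le_iff] <;> constructor <;>
      simp [max_eq_left, max_eq_right, hx, hy, abs_sub_le_iff] <;>
        cases abs_sub_le_iff.mp (le_refl |x - y|) <;> linarith [abs_nonneg (x - y),
          le_abs_self (x - y), neg_abs_le (x - y)]

lemma auxD_lip (g : ℕ → α) (a b : α) : ∀ k, |auxD g a k - auxD g b k| ≤ dist a b
  | 0 => by simp [auxD, dist_nonneg]
  | k + 1 => abs_min_sub_min (auxD_lip g a b k) (abs_dist_sub_le a b (g k))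

lemma auxD_continuous (g : ℕ → α) : ∀ k, Continuous fun a => auxD g a k
  | 0 => continuous_const
  | k + 1 => Continuous.min (auxD_continuous g k) (continuous_id.dist continuous_const)

lemma exists_tail (g : ℕ → α) (hg : DenseRange g) (a : α) {η : ℝ} (hη : 0 < η) :
    ∃ K, ∀ k, K ≤ k → auxD g a k < η := by
  obtain ⟨m, hm⟩ := hg.exists_dist_lt a hη
  exact ⟨m + 1, fun k hk =>
    lt_of_le_of_lt (auxD_le_dist g a (Nat.lt_of_lt_of_le (Nat.lt_succ_self m) hk)) hm⟩

/-- The coordinate functions of the uniform embedding into `c₀`. -/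
noncomputable def phi (R : ℝ) (g : ℕ → α) (k : ℕ) (a : α) : ℝ :=
  min (max 0 (R - dist a (g k))) (auxD g a k)

lemma phi_nonneg (R : ℝ) (g : ℕ → α) (k : ℕ) (a : α) : 0 ≤ phi R g k a :=
  le_min (le_max_left _ _) (auxD_nonneg g a k)

lemma phi_le (hR : 0 ≤ R) (g : ℕ → α) (k : ℕ) (a : α) : phi R g k a ≤ R :=
  (min_le_left _ _).trans (max_le hR (by linarith [dist_nonneg (x := a) (y := g k)]))

lemma phi_le_auxD (R : ℝ) (g : ℕ → α) (k : ℕ) (a : α) : phi R g k a ≤ auxD g a k :=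
  min_le_right _ _

lemma phi_lip (R : ℝ) (g : ℕ → α) (k : ℕ) (a b : α) :
    |phi R g k a - phi R g k b| ≤ dist a b := by
  refine abs_min_sub_min ?_ (auxD_lip g a b k)
  refine abs_max_zero_sub.trans ?_
  have : R - dist a (g k) - (R - dist b (g k)) = -(dist a (g k) - dist b (g k)) := by ring
  rw [this, abs_neg]
  exact abs_dist_sub_le a b (g k)

lemma phi_continuous (R : ℝ) (g : ℕ → α) (k : ℕ) : Continuous (phi R g k) :=
  Continuous.min (continuous_const.max (continuous_const.sub
    (continuous_id.dist continuous_const))) (auxD_continuous g k)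

lemma abs_sub_le_max {u v : ℝ} (hu : 0 ≤ u) (hv : 0 ≤ v) : |u - v| ≤ max u v := by
  rw [abs_sub_le_iff]
  constructor
  · linarith [le_max_left u v]
  · linarith [le_max_right u v]

lemma coverage (g : ℕ → α) (hg : DenseRange g) {R : ℝ} (hR0 : 0 < R) (hR1 : R ≤ 1) (a : α) :
    ∃ k, R / 2 ≤ phi R g k a ∧ dist a (g k) < R / 2 := by
  classical
  have hex : ∃ m, dist a (g m) < R / 2 := hg.exists_dist_lt a (by linarith)
  refine ⟨Nat.find hex, ?_, Nat.find_spec hex⟩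
  have hfind := Nat.find_spec hex
  refine le_min (le_max_of_le_right (by linarith)) (le_auxD g a (by linarith) _ ?_)
  exact fun m hm => le_of_not_gt (Nat.find_min hex hm)

lemma separation (g : ℕ → α) {R : ℝ} (hR0 : 0 < R) {a b : α} {k : ℕ}
    (hk : dist a (g k) < R / 2) (hd : 4 * R ≤ dist a b) : phi R g k b = 0 := by
  have htri : dist a b ≤ dist a (g k) + dist b (g k) := by
    rw [dist_comm b (g k)]; exact dist_triangle a (g k) b
  refine le_antisymm ((min_le_left _ _).trans (max_le le_rfl (by linarith))) ?_
  exact phi_nonneg R g k b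

end C0Aux

theorem E_Mn_zero_reducible_c0 (M : ℕ → Type*) [∀ n, MetricSpace (M n)]
    [∀ n, TopologicalSpace.SeparableSpace (M n)] [∀ n, CompleteSpace (M n)]
    [∀ n, MeasurableSpace (M n)] [∀ n, BorelSpace (M n)] :
    BorelReducible
      (fun x y : ∀ n, M n => Tendsto (fun n => dist (x n) (y n)) atTop (𝓝 0))
      (fun x y : ℕ → ℝ => Tendsto (fun n => |x n - y n|) atTop (𝓝 0)) := by
  classical
  by_cases hne : Nonempty (∀ n, M n)
  case neg =>
    refine ⟨fun _ _ => 0, measurable_const, fun x y => absurd ⟨x⟩ hne⟩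
  case pos =>
  obtain ⟨z⟩ := hne
  haveI hNE : ∀ n, Nonempty (M n) := fun n => ⟨z n⟩
  let e : ℕ ≃ ℕ × ℕ × ℕ := (Denumerable.eqv (ℕ × ℕ × ℕ)).symm
  let q : ∀ n, ℕ → M n := fun n => TopologicalSpace.denseSeq (M n)
  have hq : ∀ n, DenseRange (q n) := fun n => TopologicalSpace.denseRange_denseSeq (M n)
  let R : ℕ → ℝ := fun s => (1 / 2 : ℝ) ^ s
  have hR0 : ∀ s, 0 < R s := fun s => pow_pos (by norm_num) s
  have hR1 : ∀ s, R s ≤ 1 := fun s => pow_le_one₀ (by norm_num) (by norm_num)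
  set θ : (∀ n, M n) → ℕ → ℝ :=
    fun x i => C0Aux.phi (R (e i).2.1) (q (e i).1) (e i).2.2 (x (e i).1) with hθ
  refine ⟨θ, ?_, ?_⟩
  · refine measurable_pi_lambda _ fun i => ?_
    exact ((C0Aux.phi_continuous _ _ _).measurable).comp (measurable_pi_apply (e i).1)
  · intro x y
    constructor
    · -- forward direction
      intro hxy
      have key : ∀ η : ℝ, 0 < η → {i : ℕ | ¬ |θ x i - θ y i| < η}.Finite := by
        intro η hη
        have h1 : ∀ᶠ n in atTop, dist (x n) (y n) < η := by
          have := Metric.tendsto_nhds.mp hxy η hη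
          simpa [Real.dist_eq, abs_of_nonneg dist_nonneg] using this
        obtain ⟨N, hN⟩ := eventually_atTop.mp h1
        obtain ⟨S₀, hS₀⟩ := exists_pow_lt_of_lt_one hη (by norm_num : (1 / 2 : ℝ) < 1)
        have hKn : ∀ n : ℕ, ∃ K, ∀ k, K ≤ k →
            C0Aux.auxD (q n) (x n) k < η ∧ C0Aux.auxD (q n) (y n) k < η := by
          intro n
          obtain ⟨K1, h1⟩ := C0Aux.exists_tail (q n) (hq n) (x n) hη
          obtain ⟨K2, h2⟩ := C0Aux.exists_tail (q n) (hq n) (y n) hη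
          exact ⟨max K1 K2, fun k hk =>
            ⟨h1 k ((le_max_left _ _).trans hk), h2 k ((le_max_right _ _).trans hk)⟩⟩
        choose K hK using hKn
        set Kstar := (Finset.range N).sup K with hKstar
        refine Set.Finite.subset (Set.Finite.preimage (e.injective.injOn)
          ((Finset.range N ×ˢ Finset.range S₀ ×ˢ Finset.range (Kstar + 1)).finite_toSet))
          fun i hi => ?_
        simp only [Set.mem_setOf_eq, not_lt] at hi
        simp only [Set.mem_preimage, Finset.coe_product, Set.mem_prod, Finset.mem_coe,
          Finset.mem_range]
        set n := (e i).1 with hn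
        set s := (e i).2.1 with hs
        set k := (e i).2.2 with hk
        have hlip : |θ x i - θ y i| ≤ dist (x n) (y n) := C0Aux.phi_lip _ _ _ _ _
        have hnN : n < N := by
          by_contra hcon
          have := hN n (le_of_not_gt hcon)
          linarith
        have hbound : |θ x i - θ y i| ≤ R s := by
          refine (C0Aux.abs_sub_le_max (C0Aux.phi_nonneg _ _ _ _)
            (C0Aux.phi_nonneg _ _ _ _)).trans (max_le ?_ ?_) <;>
            exact C0Aux.phi_le (hR0 s).le _ _ _
        have hsS : s < S₀ := by
          by_contra hcon
          have : R s ≤ R S₀ :=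
            pow_le_pow_of_le_one (by norm_num) (by norm_num) (le_of_not_gt hcon)
          linarith
        have hkK : k < Kstar + 1 := by
          by_contra hcon
          have hKn' : K n ≤ k := by
            have h1 : K n ≤ Kstar := Finset.le_sup (Finset.mem_range.mpr hnN)
            omega
          have h2 := hK n k hKn'
          have hmax : |θ x i - θ y i| ≤
              max (C0Aux.auxD (q n) (x n) k) (C0Aux.auxD (q n) (y n) k) := by
            refine (C0Aux.abs_sub_le_max (C0Aux.phi_nonneg _ _ _ _)
              (C0Aux.phi_nonneg _ _ _ _)).trans (max_le_max ?_ ?_) <;>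
              exact C0Aux.phi_le_auxD _ _ _ _
          have : max (C0Aux.auxD (q n) (x n) k) (C0Aux.auxD (q n) (y n) k) < η :=
            max_lt h2.1 h2.2
          linarith
        exact ⟨hnN, hsS, hkK⟩
      rw [← Nat.cofinite_eq_atTop]
      refine Metric.tendsto_nhds.mpr fun η hη => ?_
      rw [Filter.eventually_cofinite]
      refine (key η hη).subset fun i hi => ?_
      simp only [Set.mem_setOf_eq] at hi ⊢
      intro hcon
      exact hi (by simpa [Real.dist_eq, abs_abs] using hcon)
    · -- backward direction
      intro hF
      by_contra hc
      have hc' : ¬ ∀ η : ℝ, 0 < η → ∀ᶠ n in atTop, dist (dist (x n) (y n)) 0 < η := by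
        intro hcon
        exact hc (Metric.tendsto_nhds.mpr fun η hη => hcon η hη)
      push_neg at hc'
      obtain ⟨ε, hε, hfreq⟩ := hc'
      have hfreq' : ∃ᶠ n in atTop, ε ≤ dist (x n) (y n) := by
        refine hfreq.mono fun n hn => ?_
        rw [Real.dist_eq, sub_zero, abs_of_nonneg dist_nonneg] at hn
        exact hn
      have hA : {n : ℕ | ε ≤ dist (x n) (y n)}.Infinite := by
        rwa [← Nat.frequently_atTop_iff_infinite]
      obtain ⟨s, hs⟩ := exists_pow_lt_of_lt_one (show (0 : ℝ) < ε / 4 by linarith)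
        (by norm_num : (1 / 2 : ℝ) < 1)
      have hcov : ∀ n : ℕ, ∃ k, R s / 2 ≤ C0Aux.phi (R s) (q n) k (x n) ∧
          dist (x n) (q n k) < R s / 2 :=
        fun n => C0Aux.coverage (q n) (hq n) (hR0 s) (hR1 s) (x n)
      choose k hk using hcov
      have hfin : {i : ℕ | ¬ |θ x i - θ y i| < R s / 2}.Finite := by
        have hev : ∀ᶠ i in atTop, |θ x i - θ y i| < R s / 2 := by
          have := Metric.tendsto_nhds.mp hF (R s / 2) (by linarith [hR0 s])
          refine this.mono fun i hi => ?_
          simpa [Real.dist_eq, abs_abs] using hi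
        rw [← Nat.cofinite_eq_atTop, Filter.eventually_cofinite] at hev
        exact hev
      set g : ℕ → ℕ := fun n => e.symm (n, s, k n) with hg
      have hginj : Function.Injective g := by
        intro a b hab
        have h1 : ((a, s, k a) : ℕ × ℕ × ℕ) = (b, s, k b) := by
          have := congrArg e hab
          simpa [hg] using this
        exact (Prod.mk.injEq _ _ _ _).mp h1 |>.1
      have hsub : {n : ℕ | ε ≤ dist (x n) (y n)} ⊆ g ⁻¹' {i : ℕ | ¬ |θ x i - θ y i| < R s / 2} := by
        intro n hn
        simp only [Set.mem_setOf_eq] at hn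
        simp only [Set.mem_preimage, Set.mem_setOf_eq, not_lt]
        have hei : e (g n) = (n, s, k n) := by simp [hg]
        have hval : ∀ w : ∀ m, M m, θ w (g n) = C0Aux.phi (R s) (q n) (k n) (w n) := by
          intro w
          show C0Aux.phi (R (e (g n)).2.1) (q (e (g n)).1) (e (g n)).2.2 (w (e (g n)).1) =
            C0Aux.phi (R s) (q n) (k n) (w n)
          rw [hei]
        have hx' := hval x
        have hy' := hval y
        have hzero : C0Aux.phi (R s) (q n) (k n) (y n) = 0 := by
          refine C0Aux.separation (q n) (hR0 s) (hk n).2 ?_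
          have : 4 * R s < ε := by
            have := hs
            simp only [R] at *
            linarith
          linarith
        rw [hx', hy', hzero, sub_zero, abs_of_nonneg (C0Aux.phi_nonneg _ _ _ _)]
        exact (hk n).1
      exact hA (hfin.preimage hginj.injOn |>.subset hsub)

end
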